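/- Let s ∈ ℝ and t ≥ 0, and let f : ℝ → ℝ be a continuous function with compact support contained in (t,∞). Define (𝓔*f)(y) := ∫_t^∞ e^{−yw} f(w) dw for y ≥ s and (𝓔g)(z) := ∫_s^∞ e^{−yz} g(y) dy for z > t. Then for every z > t, (𝓔(𝓔*f))(z) = ∫_t^∞ [ e^{−s(z+w)}/(z+w) ]·f(w) dw. -/

import Mathlib

open MeasureTheory

lemma laplace_exp_integral_Ioi (s : ℝ) {c : ℝ} (hc : 0 < c) :
    (∫ y in Set.Ioi s, Real.exp (-(y * c))) = Real.exp (-(s * c)) / c := by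
  have := integral_comp_mul_right_Ioi (fun x => Real.exp (-x)) s hc
  simp only [integral_exp_neg_Ioi, smul_eq_mul] at this
  rw [this, div_eq_inv_mul]

/-- The composition `𝓔𝓔*` of the time-and-band-limited truncations of the Laplace
transform, `(𝓔g)(z) = ∫_s^∞ e^{−yz}g(y)dy` and `(𝓔*f)(y) = ∫_t^∞ e^{−yw}f(w)dw`,
is the integral operator on `(t,∞)` with kernel `K(z,w) = e^{−s(z+w)}/(z+w)`. -/
theorem laplace_truncated_composition (s t : ℝ) (ht : 0 ≤ t)
    (f : ℝ → ℝ) (hf : Continuous f) (hsupp : HasCompactSupport f)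
    (hsub : tsupport f ⊆ Set.Ioi t) :
    ∀ z : ℝ, t < z →
      (∫ y in Set.Ioi s, Real.exp (-(y * z)) *
          (∫ w in Set.Ioi t, Real.exp (-(y * w)) * f w)) =
        ∫ w in Set.Ioi t, Real.exp (-(s * (z + w))) / (z + w) * f w := by
  intro z hz
  have hz0 : 0 < z := lt_of_le_of_lt ht hz
  rcases (tsupport f).eq_empty_or_nonempty with hK | hK
  · have hf0 : ∀ x, f x = 0 := fun x =>
      image_eq_zero_of_notMem_tsupport (by simp [hK])
    simp [hf0]
  set K := tsupport f with hKdef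
  have hKc : IsCompact K := hsupp
  set a := sInf K with ha
  set b := sSup K with hb
  have haK : a ∈ K := hKc.sInf_mem hK
  have hbK : b ∈ K := hKc.sSup_mem hK
  have hta : t < a := hsub haK
  have htb : t < b := hsub hbK
  have hza : 0 < z + a := by linarith
  have hzb : 0 < z + b := by linarith
  have hKsub : K ⊆ Set.Icc a b := fun x hx =>
    ⟨csInf_le hKc.bddBelow hx, le_csSup hKc.bddAbove hx⟩
  obtain ⟨M, hM⟩ := hsupp.exists_bound_of_continuous hf
  -- the two-variable integrand
  set F : ℝ → ℝ → ℝ := fun y w => Real.exp (-(y * z)) * (Real.exp (-(y * w)) * f w) with hF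
  have hFcont : Continuous (Function.uncurry F) := by
    apply Continuous.mul
    · exact Real.continuous_exp.comp (by fun_prop)
    · exact ((Real.continuous_exp.comp (by fun_prop)).mul (hf.comp continuous_snd))
  -- integrable bound
  have hexpa : IntegrableOn (fun y => Real.exp (-(y * (z + a)))) (Set.Ioi s) := by
    have he : (fun y : ℝ => Real.exp (-(y * (z + a)))) = fun y => Real.exp (-(z + a) * y) := by
      funext y; ring_nf
    rw [he]; exact exp_neg_integrableOn_Ioi s hza
  have hexpb : IntegrableOn (fun y => Real.exp (-(y * (z + b)))) (Set.Ioi s) := by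
    have he : (fun y : ℝ => Real.exp (-(y * (z + b)))) = fun y => Real.exp (-(z + b) * y) := by
      funext y; ring_nf
    rw [he]; exact exp_neg_integrableOn_Ioi s hzb
  have hind : Integrable (fun w => (Set.Icc a b).indicator (fun _ => M) w)
      (volume.restrict (Set.Ioi t)) := by
    apply Integrable.restrict
    rw [integrable_indicator_iff measurableSet_Icc]
    exact integrableOn_const measure_Icc_lt_top.ne
  have hBint : Integrable (fun p : ℝ × ℝ =>
      (Real.exp (-(p.1 * (z + a))) + Real.exp (-(p.1 * (z + b)))) *
        (Set.Icc a b).indicator (fun _ => M) p.2)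
      ((volume.restrict (Set.Ioi s)).prod (volume.restrict (Set.Ioi t))) :=
    (hexpa.add hexpb).mul_prod hind
  have hFint : Integrable (Function.uncurry F)
      ((volume.restrict (Set.Ioi s)).prod (volume.restrict (Set.Ioi t))) := by
    apply hBint.mono' hFcont.aestronglyMeasurable
    filter_upwards with p
    obtain ⟨y, w⟩ := p
    simp only [Function.uncurry, hF]
    by_cases hw : w ∈ Set.Icc a b
    · rw [Set.indicator_of_mem hw]
      have h1 : |Real.exp (-(y * z)) * (Real.exp (-(y * w)) * f w)| =
          Real.exp (-(y * (z + w))) * |f w| := by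
        rw [abs_mul, abs_mul, Real.abs_exp, Real.abs_exp, ← mul_assoc, ← Real.exp_add]
        ring_nf
      rw [Real.norm_eq_abs, h1]
      have h2 : Real.exp (-(y * (z + w))) ≤
          Real.exp (-(y * (z + a))) + Real.exp (-(y * (z + b))) := by
        rcases le_or_gt 0 y with hy | hy
        · have : Real.exp (-(y * (z + w))) ≤ Real.exp (-(y * (z + a))) :=
            Real.exp_le_exp.2 (by nlinarith [hw.1])
          nlinarith [Real.exp_pos (-(y * (z + b)))]
        · have : Real.exp (-(y * (z + w))) ≤ Real.exp (-(y * (z + b))) :=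
            Real.exp_le_exp.2 (by nlinarith [hw.2])
          nlinarith [Real.exp_pos (-(y * (z + a)))]
      have hfM : |f w| ≤ M := by simpa using hM w
      have := mul_le_mul h2 hfM (abs_nonneg _)
        (by positivity)
      exact this
    · rw [Set.indicator_of_notMem hw]
      have hfw : f w = 0 :=
        image_eq_zero_of_notMem_tsupport fun h => hw (hKsub h)
      simp [hfw]
  -- swap and compute
  calc (∫ y in Set.Ioi s, Real.exp (-(y * z)) *
          (∫ w in Set.Ioi t, Real.exp (-(y * w)) * f w))
      = ∫ y in Set.Ioi s, ∫ w in Set.Ioi t, F y w := by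
        refine setIntegral_congr_fun measurableSet_Ioi fun y _ => ?_
        rw [← integral_const_mul]
    _ = ∫ w in Set.Ioi t, ∫ y in Set.Ioi s, F y w := integral_integral_swap hFint
    _ = ∫ w in Set.Ioi t, Real.exp (-(s * (z + w))) / (z + w) * f w := by
        refine setIntegral_congr_fun measurableSet_Ioi fun w hw => ?_
        have hzw : 0 < z + w := by
          have : t < w := hw
          linarith
        have : (∫ y in Set.Ioi s, F y w) =
            (∫ y in Set.Ioi s, Real.exp (-(y * (z + w)))) * f w := by
          rw [← integral_mul_const]
          refine setIntegral_congr_fun measurableSet_Ioi fun y _ => ?_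
          simp only [hF, ← mul_assoc, ← Real.exp_add]
          ring_nf
        rw [this, laplace_exp_integral_Ioi s hzw]
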